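/- Let G be a connected D(4) graph and let C = (V_1, V_2, V_3, V_4) be any dominator coloring of G with exactly 4 color classes. Then at most one of the four color classes is a singleton. -/

import Mathlib

open SimpleGraph

section Defs

variable {V : Type*} (G : SimpleGraph V)

/-- `D` is a dominating set of `G`: every vertex outside `D` has a neighbor in `D`. -/
def IsDomSet (D : Set V) : Prop := ∀ v, v ∉ D → ∃ u ∈ D, G.Adj u v

/-- `D` is a total dominating set of `G`: every vertex has a neighbor in `D`. -/
def IsTotalDomSet (D : Set V) : Prop := ∀ v, ∃ u ∈ D, G.Adj u v

/-- The domination number `γ(G)`. -/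
noncomputable def domNum [Fintype V] : ℕ :=
  sInf {n | ∃ D : Set V, IsDomSet G D ∧ D.ncard = n}

/-- The total domination number `γ_t(G)`. -/
noncomputable def totalDomNum [Fintype V] : ℕ :=
  sInf {n | ∃ D : Set V, IsTotalDomSet G D ∧ D.ncard = n}

/-- `C` is a proper coloring of `G` with exactly `k` color classes:
a partition of the vertex set into `k` nonempty independent sets. -/
def IsProperColoring {k : ℕ} (C : Fin k → Set V) : Prop :=
  (∀ v, ∃! i, v ∈ C i) ∧ (∀ i, (C i).Nonempty) ∧
    (∀ i, ∀ u ∈ C i, ∀ w ∈ C i, ¬ G.Adj u w)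

/-- `v` dominates the color class `S`: every vertex of `S` is in the
closed neighborhood of `v`. -/
def DominatesClass (v : V) (S : Set V) : Prop := ∀ u ∈ S, u = v ∨ G.Adj v u

/-- A dominator coloring: a proper coloring in which every vertex dominates
at least one color class. -/
def IsDominatorColoring {k : ℕ} (C : Fin k → Set V) : Prop :=
  IsProperColoring G C ∧ ∀ v, ∃ i, DominatesClass G v (C i)

/-- A dominated coloring: a proper coloring in which every color class has a
dominating vertex, i.e. a vertex adjacent to every vertex of the class. -/
def IsDominatedColoring {k : ℕ} (C : Fin k → Set V) : Prop :=
  IsProperColoring G C ∧ ∀ i, ∃ v, ∀ u ∈ C i, G.Adj v u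

/-- The dominator chromatic number `χ_d(G)`. -/
noncomputable def domChromNum : ℕ :=
  sInf {k | ∃ C : Fin k → Set V, IsDominatorColoring G C}

/-- The dominated chromatic number `χ_dom(G)`. -/
noncomputable def dominatedChromNum : ℕ :=
  sInf {k | ∃ C : Fin k → Set V, IsDominatedColoring G C}

/-- `G` is a `D(k)` graph: `γ(G) = χ(G) = χ_d(G) = k`. -/
def IsDk [Fintype V] (k : ℕ) : Prop :=
  domNum G = k ∧ G.chromaticNumber = (k : ℕ∞) ∧ domChromNum G = k

end Defs

/-- If `G` is a connected `D(4)` graph and `C` is any dominator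
coloring of `G` with exactly 4 color classes, then at most one of the four
color classes is a singleton. -/
private lemma fin4_aux : ∀ i j : Fin 4, i ≠ j → ∃ k l : Fin 4, k ≠ l ∧ k ≠ i ∧ k ≠ j ∧
    l ≠ i ∧ l ≠ j ∧ ∀ m : Fin 4, m = i ∨ m = j ∨ m = k ∨ m = l := by decide

private lemma exists_neighbor {V : Type*} (G : SimpleGraph V) (hconn : G.Connected)
    {x y : V} (hxy : x ≠ y) : ∃ u, G.Adj x u := by
  obtain ⟨p⟩ := hconn.preconnected x y
  cases p with
  | nil => exact absurd rfl hxy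
  | cons h _ => exact ⟨_, h⟩

private lemma dom_of_small {V : Type*} [Fintype V] (G : SimpleGraph V)
    (hγ : domNum G = 4) (x y z : V)
    (hD : ∀ v, v ∈ ({x, y, z} : Set V) ∨ ∃ u ∈ ({x, y, z} : Set V), G.Adj u v) : False := by
  have hdom : IsDomSet G ({x, y, z} : Set V) := fun v hv => (hD v).resolve_left hv
  have hle : domNum G ≤ ({x, y, z} : Set V).ncard := Nat.sInf_le ⟨_, hdom, rfl⟩
  have hcard : ({x, y, z} : Set V).ncard ≤ 3 := by
    have h1 : ({x, y, z} : Set V).ncard ≤ ({y, z} : Set V).ncard + 1 := Set.ncard_insert_le _ _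
    have h2 : ({y, z} : Set V).ncard ≤ ({z} : Set V).ncard + 1 := Set.ncard_insert_le _ _
    have h3 : ({z} : Set V).ncard = 1 := Set.ncard_singleton z
    omega
  omega

/-- Key lemma: given the two singleton classes `{a}`, `{b}` with `a ~ b`, if every
vertex of class `k` is adjacent to `a` or `b`, we find a dominating set of size 3. -/
private lemma key_lemma {V : Type*} [Fintype V] (G : SimpleGraph V) (hconn : G.Connected)
    (hγ : domNum G = 4) (C : Fin 4 → Set V) (hC : IsDominatorColoring G C)
    (i j k l : Fin 4) (hki : k ≠ i) (hkj : k ≠ j) (hli : l ≠ i) (hlj : l ≠ j) (hkl : k ≠ l)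
    (hcover : ∀ m : Fin 4, m = i ∨ m = j ∨ m = k ∨ m = l)
    (a b : V) (hCi : C i = {a}) (hCj : C j = {b})
    (P3 : ∀ v ∈ C k, G.Adj a v ∨ G.Adj b v) : False := by
  obtain ⟨⟨uniq, hne, indep⟩, domv⟩ := hC
  have class_eq : ∀ (v : V) (m n : Fin 4), v ∈ C m → v ∈ C n → m = n := by
    intro v m n h1 h2
    obtain ⟨m0, _, hu⟩ := uniq v
    rw [hu m h1, hu n h2]
  by_cases hP : ∀ v ∈ C l, G.Adj a v ∨ G.Adj b v ∨ DominatesClass G v (C k)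
  · obtain ⟨x3, hx3⟩ := hne k
    refine dom_of_small G hγ a b x3 ?_
    intro v
    obtain ⟨m, hm⟩ := (uniq v).exists
    rcases hcover m with rfl | rfl | rfl | rfl
    · left; rw [hCi] at hm; exact Or.inl hm
    · left; rw [hCj] at hm; exact Or.inr (Or.inl hm)
    · rcases P3 v hm with h | h
      · exact Or.inr ⟨a, by simp, h⟩
      · exact Or.inr ⟨b, by simp, h⟩
    · rcases hP v hm with h | h | h
      · exact Or.inr ⟨a, by simp, h⟩
      · exact Or.inr ⟨b, by simp, h⟩
      · rcases h x3 hx3 with rfl | hadj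
        · exact absurd (class_eq _ _ _ hx3 hm) hkl
        · exact Or.inr ⟨x3, by simp, hadj.symm⟩
  · push_neg at hP
    obtain ⟨c, hcl, hca, hcb, hcd⟩ := hP
    -- `C l = {c}`
    have hlsing : ∀ x ∈ C l, x = c := by
      obtain ⟨m, hdm⟩ := domv c
      rcases hcover m with rfl | rfl | rfl | rfl
      · rw [hCi] at hdm
        rcases hdm a rfl with rfl | hadj
        · exact absurd (class_eq _ _ _ (by rw [hCi]; rfl) hcl) (Ne.symm hli)
        · exact absurd hadj.symm hca
      · rw [hCj] at hdm
        rcases hdm b rfl with rfl | hadj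
        · exact absurd (class_eq _ _ _ (by rw [hCj]; rfl) hcl) (Ne.symm hlj)
        · exact absurd hadj.symm hcb
      · exact absurd hdm hcd
      · intro x hx
        rcases hdm x hx with rfl | hadj
        · rfl
        · exact absurd hadj (indep _ _ hcl _ hx)
    have hac : c ≠ a := by
      intro h
      exact hli (class_eq _ _ _ hcl (by rw [h, hCi]; rfl))
    obtain ⟨u, hcu⟩ := exists_neighbor G hconn hac
    obtain ⟨m, hum⟩ := (uniq u).exists
    rcases hcover m with rfl | rfl | rfl | rfl
    · rw [hCi] at hum; subst hum
      exact absurd hcu.symm hca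
    · rw [hCj] at hum; subst hum
      exact absurd hcu.symm hcb
    · -- u ∈ C k : take D = {a, b, u}
      refine dom_of_small G hγ a b u ?_
      intro v
      obtain ⟨m, hm⟩ := (uniq v).exists
      rcases hcover m with rfl | rfl | rfl | rfl
      · left; rw [hCi] at hm; exact Or.inl hm
      · left; rw [hCj] at hm; exact Or.inr (Or.inl hm)
      · rcases P3 v hm with h | h
        · exact Or.inr ⟨a, by simp, h⟩
        · exact Or.inr ⟨b, by simp, h⟩
      · have := hlsing v hm; subst this
        exact Or.inr ⟨u, by simp, hcu.symm⟩
    · rw [hlsing u hum] at hcu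
      exact G.loopless.irrefl c hcu

theorem stmt_14 {V : Type*} [Fintype V] (G : SimpleGraph V)
    (hconn : G.Connected) (hDk : IsDk G 4)
    (C : Fin 4 → Set V) (hC : IsDominatorColoring G C) :
    ∀ i j : Fin 4, (∃ a : V, C i = {a}) → (∃ b : V, C j = {b}) → i = j := by
  intro i j hi hj
  by_contra hij
  obtain ⟨a, ha⟩ := hi
  obtain ⟨b, hb⟩ := hj
  obtain ⟨k, l, hkl, hki, hkj, hli, hlj, hcover⟩ := fin4_aux i j hij
  obtain ⟨⟨uniq, hne, indep⟩, domv⟩ := hC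
  have class_eq : ∀ (v : V) (m n : Fin 4), v ∈ C m → v ∈ C n → m = n := by
    intro v m n h1 h2
    obtain ⟨m0, _, hu⟩ := uniq v
    rw [hu m h1, hu n h2]
  have hma : a ∈ C i := by rw [ha]; rfl
  have hmb : b ∈ C j := by rw [hb]; rfl
  -- Step 1: a and b are adjacent, else we could 3-color G.
  have hab : G.Adj a b := by
    by_contra hnadj
    classical
    set f : V → Fin 3 := fun v => if v ∈ C k then 1 else if v ∈ C l then 2 else 0 with hf
    have valid : ∀ {u w : V}, G.Adj u w → f u ≠ f w := by
      intro u w hadj heq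
      by_cases huk : u ∈ C k <;> by_cases hwk : w ∈ C k <;>
        by_cases hul : u ∈ C l <;> by_cases hwl : w ∈ C l <;>
        simp [hf, huk, hwk, hul, hwl] at heq
      · exact indep k u huk w hwk hadj
      · exact indep k u huk w hwk hadj
      · exact indep k u huk w hwk hadj
      · exact indep k u huk w hwk hadj
      · exact indep l u hul w hwl hadj
      · -- both outside C k and C l, so each is a or b
        have hu' : u = a ∨ u = b := by
          obtain ⟨m, hm⟩ := (uniq u).exists
          rcases hcover m with rfl | rfl | rfl | rfl
          · rw [ha] at hm; exact Or.inl hm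
          · rw [hb] at hm; exact Or.inr hm
          · exact absurd hm huk
          · exact absurd hm hul
        have hw' : w = a ∨ w = b := by
          obtain ⟨m, hm⟩ := (uniq w).exists
          rcases hcover m with rfl | rfl | rfl | rfl
          · rw [ha] at hm; exact Or.inl hm
          · rw [hb] at hm; exact Or.inr hm
          · exact absurd hm hwk
          · exact absurd hm hwl
        rcases hu' with rfl | rfl <;> rcases hw' with rfl | rfl
        · exact hadj.ne rfl
        · exact hnadj hadj
        · exact hnadj hadj.symm
        · exact hadj.ne rfl
    have hcol : G.Colorable 3 := ⟨⟨f, valid⟩⟩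
    have hle := hcol.chromaticNumber_le
    rw [hDk.2.1] at hle
    norm_num at hle
  have hC' : IsDominatorColoring G C := ⟨⟨uniq, hne, indep⟩, domv⟩
  -- Step 2: case analysis producing a dominating set of size ≤ 3.
  by_cases P3 : ∀ v ∈ C k, G.Adj a v ∨ G.Adj b v
  · exact key_lemma G hconn hDk.1 C hC' i j k l hki hkj hli hlj hkl hcover a b ha hb P3
  by_cases P4 : ∀ v ∈ C l, G.Adj a v ∨ G.Adj b v
  · refine key_lemma G hconn hDk.1 C hC' i j l k hli hlj hki hkj (Ne.symm hkl) ?_ a b ha hb P4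
    intro m; rcases hcover m with h | h | h | h <;> tauto
  · push_neg at P3 P4
    obtain ⟨u, huk, hua, hub⟩ := P3
    obtain ⟨w, hwl, hwa, hwb⟩ := P4
    -- what u dominates
    have hu' : DominatesClass G u (C l) ∨ (∀ x ∈ C k, x = u) := by
      obtain ⟨m, hdm⟩ := domv u
      rcases hcover m with rfl | rfl | rfl | rfl
      · rw [ha] at hdm
        rcases hdm a rfl with rfl | hadj
        · exact absurd (class_eq _ _ _ hma huk) (Ne.symm hki)
        · exact absurd hadj.symm hua
      · rw [hb] at hdm
        rcases hdm b rfl with rfl | hadj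
        · exact absurd (class_eq _ _ _ hmb huk) (Ne.symm hkj)
        · exact absurd hadj.symm hub
      · right; intro x hx
        rcases hdm x hx with rfl | hadj
        · rfl
        · exact absurd hadj (indep _ _ huk _ hx)
      · exact Or.inl hdm
    have hw' : DominatesClass G w (C k) ∨ (∀ x ∈ C l, x = w) := by
      obtain ⟨m, hdm⟩ := domv w
      rcases hcover m with rfl | rfl | rfl | rfl
      · rw [ha] at hdm
        rcases hdm a rfl with rfl | hadj
        · exact absurd (class_eq _ _ _ hma hwl) (Ne.symm hli)
        · exact absurd hadj.symm hwa
      · rw [hb] at hdm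
        rcases hdm b rfl with rfl | hadj
        · exact absurd (class_eq _ _ _ hmb hwl) (Ne.symm hlj)
        · exact absurd hadj.symm hwb
      · exact Or.inl hdm
      · right; intro x hx
        rcases hdm x hx with rfl | hadj
        · rfl
        · exact absurd hadj (indep _ _ hwl _ hx)
    rcases hu' with hudl | hksing <;> rcases hw' with hwdk | hlsing
    · -- u dominates C l, w dominates C k : D = {a, u, w}
      refine dom_of_small G hDk.1 a u w ?_
      intro v
      obtain ⟨m, hm⟩ := (uniq v).exists
      rcases hcover m with rfl | rfl | rfl | rfl
      · left; rw [ha] at hm; exact Or.inl hm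
      · rw [hb] at hm; subst hm
        exact Or.inr ⟨a, by simp, hab⟩
      · rcases hwdk v hm with rfl | hadj
        · exact absurd (class_eq _ _ _ hwl hm) (Ne.symm hkl)
        · exact Or.inr ⟨w, by simp, hadj⟩
      · rcases hudl v hm with rfl | hadj
        · exact absurd (class_eq _ _ _ huk hm) hkl
        · exact Or.inr ⟨u, by simp, hadj⟩
    · -- u dominates C l, C l = {w} : D = {a, b, w}
      have huw : G.Adj u w := by
        rcases hudl w hwl with rfl | hadj
        · exact absurd (class_eq _ _ _ huk hwl) hkl
        · exact hadj
      refine dom_of_small G hDk.1 a b w ?_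
      intro v
      obtain ⟨m, hm⟩ := (uniq v).exists
      rcases hcover m with rfl | rfl | rfl | rfl
      · left; rw [ha] at hm; exact Or.inl hm
      · left; rw [hb] at hm; exact Or.inr (Or.inl hm)
      · -- v ∈ C k
        obtain ⟨m, hdm⟩ := domv v
        rcases hcover m with rfl | rfl | rfl | rfl
        · rw [ha] at hdm
          rcases hdm a rfl with rfl | hadj
          · exact absurd (class_eq _ _ _ hma hm) (Ne.symm hki)
          · exact Or.inr ⟨a, by simp, hadj.symm⟩
        · rw [hb] at hdm
          rcases hdm b rfl with rfl | hadj
          · exact absurd (class_eq _ _ _ hmb hm) (Ne.symm hkj)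
          · exact Or.inr ⟨b, by simp, hadj.symm⟩
        · -- v dominates its own class C k, so C k = {v} and u = v
          have huv : u = v := by
            rcases hdm u huk with h | hadj
            · exact h
            · exact absurd hadj (indep _ _ hm _ huk)
          subst huv
          exact Or.inr ⟨w, by simp, huw.symm⟩
        · rcases hdm w hwl with rfl | hadj
          · exact absurd (class_eq _ _ _ hm hwl) hkl
          · exact Or.inr ⟨w, by simp, hadj.symm⟩
      · have := hlsing v hm; subst this
        left; simp
    · -- C k = {u}, w dominates C k : D = {a, b, u}
      have hwu : G.Adj w u := by
        rcases hwdk u huk with rfl | hadj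
        · exact absurd (class_eq _ _ _ hwl huk) (Ne.symm hkl)
        · exact hadj
      refine dom_of_small G hDk.1 a b u ?_
      intro v
      obtain ⟨m, hm⟩ := (uniq v).exists
      rcases hcover m with rfl | rfl | rfl | rfl
      · left; rw [ha] at hm; exact Or.inl hm
      · left; rw [hb] at hm; exact Or.inr (Or.inl hm)
      · have := hksing v hm; subst this
        left; simp
      · -- v ∈ C l
        obtain ⟨m, hdm⟩ := domv v
        rcases hcover m with rfl | rfl | rfl | rfl
        · rw [ha] at hdm
          rcases hdm a rfl with rfl | hadj
          · exact absurd (class_eq _ _ _ hma hm) (Ne.symm hli)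
          · exact Or.inr ⟨a, by simp, hadj.symm⟩
        · rw [hb] at hdm
          rcases hdm b rfl with rfl | hadj
          · exact absurd (class_eq _ _ _ hmb hm) (Ne.symm hlj)
          · exact Or.inr ⟨b, by simp, hadj.symm⟩
        · rcases hdm u huk with rfl | hadj
          · exact absurd (class_eq _ _ _ hm huk) (Ne.symm hkl)
          · exact Or.inr ⟨u, by simp, hadj.symm⟩
        · -- v dominates its own class C l, so C l = {v} and w = v
          have hwv : w = v := by
            rcases hdm w hwl with h | hadj
            · exact h
            · exact absurd hadj (indep _ _ hm _ hwl)
          subst hwv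
          exact Or.inr ⟨u, by simp, hwu.symm⟩
    · -- C k = {u}, C l = {w} : u has a neighbor, which must be w
      have hau : u ≠ a := fun h => (Ne.symm hki) (class_eq _ _ _ hma (h ▸ huk))
      obtain ⟨z, huz⟩ := exists_neighbor G hconn hau
      obtain ⟨m, hzm⟩ := (uniq z).exists
      have huw : G.Adj u w := by
        rcases hcover m with rfl | rfl | rfl | rfl
        · rw [ha] at hzm; subst hzm; exact absurd huz.symm hua
        · rw [hb] at hzm; subst hzm; exact absurd huz.symm hub
        · rw [hksing z hzm] at huz; exact absurd huz (G.loopless.irrefl u)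
        · have := hlsing z hzm; subst this; exact huz
      refine dom_of_small G hDk.1 a b u ?_
      intro v
      obtain ⟨m, hm⟩ := (uniq v).exists
      rcases hcover m with rfl | rfl | rfl | rfl
      · left; rw [ha] at hm; exact Or.inl hm
      · left; rw [hb] at hm; exact Or.inr (Or.inl hm)
      · have := hksing v hm; subst this; left; simp
      · have := hlsing v hm; subst this
        exact Or.inr ⟨u, by simp, huw⟩
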